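/- Implicit Loss Embedding for the FNGW loss: fix integers m, m_max, S, T ≥ 1, finite sets 𝓕 ⊂ ℝ^S and 𝓣 ⊂ ℝ^T, and trade-off parameters (α, β) ∈ [0,1]² with α + β ≤ 1. Let 𝒢 be the (finite) set of graphs g = (F, A, E, p) with m_g ≤ m_max nodes, A ∈ {0,1}^{m_g×m_g}, node features F = (F_i)_{i=1}^{m_g} ∈ 𝓕^{m_g}, edge features E = (E_{ij}) ∈ 𝓣^{m_g×m_g}, and uniform histogram p = m_g^{−1} 𝟙_{m_g}. Let 𝒢_m be the compact set of relaxed graphs (F, A, E, p) with A ∈ [0,1]^{m×m}, F ∈ Conv(𝓕)^m, E ∈ Conv(𝓣)^{m×m}, and p = m^{−1} 𝟙_m. Then the loss FNGW_{α,β} : 𝒢_m × 𝒢 → ℝ admits an Implicit Loss Embedding: there exist a separable Hilbert space H and measurable bounded maps ψ : 𝒢_m → H and φ : 𝒢 → H such that FNGW_{α,β}(z, y) = ⟨ψ(z), φ(y)⟩_H for all z ∈ 𝒢_m, y ∈ 𝒢, and ‖φ(y)‖_H ≤ 1 for all y ∈ 𝒢. -/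

import Mathlib

open MeasureTheory

/-- A labeled graph of the finite output space `𝒢`: at most `mmax` nodes (and at least one),
a `{0,1}`-adjacency matrix, node features in the finite set `FS ⊂ ℝ^S`, edge features in the
finite set `TS ⊂ ℝ^T`, and (implicitly) the uniform histogram on its nodes. -/
structure DiscGraph (S T mmax : ℕ) (FS : Set (Fin S → ℝ)) (TS : Set (Fin T → ℝ)) where
  sz : ℕ
  sz_pos : 1 ≤ sz
  sz_le : sz ≤ mmax
  F : Fin sz → Fin S → ℝ
  A : Fin sz → Fin sz → ℝ
  E : Fin sz → Fin sz → Fin T → ℝ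
  hF : ∀ i, F i ∈ FS
  hA : ∀ i j, A i j = 0 ∨ A i j = 1
  hE : ∀ i j, E i j ∈ TS

/-- The compact set `𝒢_m` of relaxed graphs on `m` nodes: `A ∈ [0,1]^{m×m}`,
`F ∈ Conv(FS)^m`, `E ∈ Conv(TS)^{m×m}` (with the uniform histogram `p = 𝟙_m / m`). -/
def RelGraphSet (S T m : ℕ) (FS : Set (Fin S → ℝ)) (TS : Set (Fin T → ℝ)) :
    Set ((Fin m → Fin S → ℝ) × (Fin m → Fin m → ℝ) × (Fin m → Fin m → Fin T → ℝ)) :=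
  {z | (∀ i, z.1 i ∈ convexHull ℝ FS) ∧ (∀ i j, z.2.1 i j ∈ Set.Icc (0 : ℝ) 1)
    ∧ (∀ i j, z.2.2 i j ∈ convexHull ℝ TS)}

/-- The discrete FNGW loss (`q = 2`, `p = 1`, squared Euclidean ground distances) between a
relaxed graph `z ∈ 𝒢_m` (uniform histogram `𝟙_m / m`) and a graph `y ∈ 𝒢` (uniform histogram
`𝟙_{m_y} / m_y`), as the infimum of the quadratic cost over couplings. -/
noncomputable def fngwLoss {S T m mmax : ℕ} {FS : Set (Fin S → ℝ)} {TS : Set (Fin T → ℝ)}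
    (α β : ℝ) (z : RelGraphSet S T m FS TS) (y : DiscGraph S T mmax FS TS) : ℝ :=
  sInf {c : ℝ | ∃ π : Fin m → Fin y.sz → ℝ,
    (∀ k l, 0 ≤ π k l) ∧ (∀ k, ∑ l, π k l = 1 / (m : ℝ))
      ∧ (∀ l, ∑ k, π k l = 1 / (y.sz : ℝ))
      ∧ c = ∑ i, ∑ j, ∑ k, ∑ l,
          (α * (∑ t, (z.1.2.2 i k t - y.E j l t) ^ 2)
            + β * (z.1.2.1 i k - y.A j l) ^ 2
            + (1 - α - β) * (∑ s, (z.1.1 i s - y.F j s) ^ 2)) * π k l * π i j}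

open Finset in
/-- couplings between the uniform histograms on `m` and `n` points -/
def coup (m n : ℕ) : Set (Fin m → Fin n → ℝ) :=
  {π | (∀ k l, 0 ≤ π k l) ∧ (∀ k, ∑ l, π k l = 1 / (m : ℝ)) ∧ (∀ l, ∑ k, π k l = 1 / (n : ℝ))}

lemma prodCoup_mem {m n : ℕ} (hm : 1 ≤ m) (hn : 1 ≤ n) :
    (fun _ _ => 1 / ((m : ℝ) * n)) ∈ coup m n := by
  have hm' : (m : ℝ) ≠ 0 := Nat.cast_ne_zero.mpr (by omega)
  have hn' : (n : ℝ) ≠ 0 := Nat.cast_ne_zero.mpr (by omega)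
  refine ⟨fun k l => by positivity, fun k => ?_, fun l => ?_⟩
  · simp only [Finset.sum_const, Finset.card_univ, Fintype.card_fin, nsmul_eq_mul]
    field_simp
  · simp only [Finset.sum_const, Finset.card_univ, Fintype.card_fin, nsmul_eq_mul]
    field_simp

lemma coup_sum_one {m n : ℕ} (hm : 1 ≤ m) {π : Fin m → Fin n → ℝ}
    (hrow : ∀ k, ∑ l, π k l = 1 / (m : ℝ)) : ∑ k, ∑ l, π k l = 1 := by
  have hm' : (m : ℝ) ≠ 0 := Nat.cast_ne_zero.mpr (by omega)
  simp only [hrow, Finset.sum_const, Finset.card_univ, Fintype.card_fin, nsmul_eq_mul]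
  field_simp

/-- bounding the quadratic transport cost by a uniform bound on the pairwise costs -/
lemma sum4_le {m n : ℕ} (hm : 1 ≤ m) (b : Fin m → Fin n → Fin m → Fin n → ℝ)
    {π : Fin m → Fin n → ℝ} (hπ0 : ∀ k l, 0 ≤ π k l)
    (hrow : ∀ k, ∑ l, π k l = 1 / (m : ℝ)) {C : ℝ} (hb : ∀ i j k l, b i j k l ≤ C) :
    ∑ i, ∑ j, ∑ k, ∑ l, b i j k l * π k l * π i j ≤ C := by
  have htot : ∑ k, ∑ l, π k l = 1 := coup_sum_one hm hrow
  have step1 : ∑ i, ∑ j, ∑ k, ∑ l, b i j k l * π k l * π i j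
      ≤ ∑ i, ∑ j, ∑ k, ∑ l, C * π k l * π i j := by
    refine Finset.sum_le_sum fun i _ => Finset.sum_le_sum fun j _ =>
      Finset.sum_le_sum fun k _ => Finset.sum_le_sum fun l _ => ?_
    exact mul_le_mul_of_nonneg_right
      (mul_le_mul_of_nonneg_right (hb i j k l) (hπ0 k l)) (hπ0 i j)
  have inner : ∀ p : ℝ, ∑ k, ∑ l, C * π k l * p = C * p := by
    intro p
    have : ∑ k, ∑ l, C * π k l * p = ∑ k, (∑ l, π k l) * (C * p) := by
      refine Finset.sum_congr rfl fun k _ => ?_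
      rw [Finset.sum_mul]
      refine Finset.sum_congr rfl fun l _ => by ring
    rw [this, ← Finset.sum_mul, htot, one_mul]
  have step2 : ∑ i, ∑ j, ∑ k, ∑ l, C * π k l * π i j = C := by
    have h1 : ∑ i, ∑ j, ∑ k, ∑ l, C * π k l * π i j = ∑ i, ∑ j, C * π i j :=
      Finset.sum_congr rfl fun i _ => Finset.sum_congr rfl fun j _ => inner _
    have h2 : ∑ i : Fin m, ∑ j : Fin n, C * π i j = C * ∑ i, ∑ j, π i j := by
      rw [Finset.mul_sum]
      exact Finset.sum_congr rfl fun i _ => by rw [Finset.mul_sum]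
    rw [h1, h2, htot, mul_one]
  exact le_of_le_of_eq step1 step2

section Cost

variable {S T m mmax : ℕ} {FS : Set (Fin S → ℝ)} {TS : Set (Fin T → ℝ)}

/-- the quadratic FNGW transport cost of a coupling -/
noncomputable def gcost (α β : ℝ)
    (z : (Fin m → Fin S → ℝ) × (Fin m → Fin m → ℝ) × (Fin m → Fin m → Fin T → ℝ))
    (y : DiscGraph S T mmax FS TS) (π : Fin m → Fin y.sz → ℝ) : ℝ :=
  ∑ i, ∑ j, ∑ k, ∑ l,
    (α * (∑ t, (z.2.2 i k t - y.E j l t) ^ 2)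
      + β * (z.2.1 i k - y.A j l) ^ 2
      + (1 - α - β) * (∑ s, (z.1 i s - y.F j s) ^ 2)) * π k l * π i j

lemma fngwLoss_eq (α β : ℝ) (z : RelGraphSet S T m FS TS) (y : DiscGraph S T mmax FS TS) :
    fngwLoss α β z y = sInf (gcost α β z.1 y '' coup m y.sz) := by
  unfold fngwLoss
  congr 1
  ext c
  constructor
  · rintro ⟨π, h1, h2, h3, rfl⟩
    exact ⟨π, ⟨h1, h2, h3⟩, rfl⟩
  · rintro ⟨π, ⟨h1, h2, h3⟩, rfl⟩
    exact ⟨π, h1, h2, h3, rfl⟩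

lemma gcost_nonneg {α β : ℝ} (hα : 0 ≤ α) (hβ : 0 ≤ β) (hαβ : α + β ≤ 1)
    (z : (Fin m → Fin S → ℝ) × (Fin m → Fin m → ℝ) × (Fin m → Fin m → Fin T → ℝ))
    (y : DiscGraph S T mmax FS TS) {π : Fin m → Fin y.sz → ℝ}
    (hπ0 : ∀ k l, 0 ≤ π k l) : 0 ≤ gcost α β z y π := by
  refine Finset.sum_nonneg fun i _ => Finset.sum_nonneg fun j _ =>
    Finset.sum_nonneg fun k _ => Finset.sum_nonneg fun l _ => ?_
  have hbr : 0 ≤ α * (∑ t, (z.2.2 i k t - y.E j l t) ^ 2)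
      + β * (z.2.1 i k - y.A j l) ^ 2
      + (1 - α - β) * (∑ s, (z.1 i s - y.F j s) ^ 2) := by
    have h1 : 0 ≤ ∑ t, (z.2.2 i k t - y.E j l t) ^ 2 := by positivity
    have h2 : 0 ≤ (z.2.1 i k - y.A j l) ^ 2 := by positivity
    have h3 : 0 ≤ ∑ s, (z.1 i s - y.F j s) ^ 2 := by positivity
    have h4 : 0 ≤ 1 - α - β := by linarith
    positivity
  exact mul_nonneg (mul_nonneg hbr (hπ0 k l)) (hπ0 i j)

lemma gcost_bddBelow {α β : ℝ} (hα : 0 ≤ α) (hβ : 0 ≤ β) (hαβ : α + β ≤ 1)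
    (z : (Fin m → Fin S → ℝ) × (Fin m → Fin m → ℝ) × (Fin m → Fin m → Fin T → ℝ))
    (y : DiscGraph S T mmax FS TS) :
    (0 : ℝ) ∈ lowerBounds (gcost α β z y '' coup m y.sz) := by
  rintro c ⟨π, hπ, rfl⟩
  exact gcost_nonneg hα hβ hαβ z y hπ.1

end Cost

section Bound

variable {S T m mmax : ℕ} {FS : Set (Fin S → ℝ)} {TS : Set (Fin T → ℝ)}

lemma exists_hull_bound {N : ℕ} {W : Set (Fin N → ℝ)} (hW : W.Finite) :
    ∃ R : ℝ, 0 ≤ R ∧ ∀ x ∈ convexHull ℝ W, ‖x‖ ≤ R := by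
  obtain ⟨R₀, hR₀⟩ := isBounded_iff_forall_norm_le.mp
    (isBounded_convexHull.mpr hW.isBounded)
  exact ⟨max R₀ 0, le_max_right _ _, fun x hx => (hR₀ x hx).trans (le_max_left _ _)⟩

lemma sq_sum_bound {N : ℕ} {W : Set (Fin N → ℝ)} {R : ℝ} (hR0 : 0 ≤ R)
    (hR : ∀ x ∈ convexHull ℝ W, ‖x‖ ≤ R) {u v : Fin N → ℝ}
    (hu : u ∈ convexHull ℝ W) (hv : v ∈ convexHull ℝ W) :
    ∑ t, (u t - v t) ^ 2 ≤ N * (2 * R) ^ 2 := by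
  have hterm : ∀ t, (u t - v t) ^ 2 ≤ (2 * R) ^ 2 := by
    intro t
    have h1 : |u t| ≤ R := (norm_le_pi_norm u t).trans (hR u hu)
    have h2 : |v t| ≤ R := (norm_le_pi_norm v t).trans (hR v hv)
    have habs : |u t - v t| ≤ 2 * R := by
      calc |u t - v t| ≤ |u t| + |v t| := abs_sub _ _
        _ ≤ 2 * R := by linarith
    exact sq_le_sq' (by linarith [abs_le.mp habs]) (abs_le.mp habs).2
  calc ∑ t, (u t - v t) ^ 2 ≤ ∑ _t : Fin N, (2 * R) ^ 2 := Finset.sum_le_sum fun t _ => hterm t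
    _ = N * (2 * R) ^ 2 := by
        simp [Finset.sum_const, Finset.card_univ, nsmul_eq_mul]

/-- uniform bound on the FNGW loss -/
lemma fngwLoss_mem_Icc (hm : 1 ≤ m) (hFSfin : FS.Finite) (hTSfin : TS.Finite)
    {α β : ℝ} (hα : α ∈ Set.Icc (0:ℝ) 1) (hβ : β ∈ Set.Icc (0:ℝ) 1) (hαβ : α + β ≤ 1) :
    ∃ C : ℝ, 0 ≤ C ∧ ∀ (z : RelGraphSet S T m FS TS) (y : DiscGraph S T mmax FS TS),
      fngwLoss α β z y ∈ Set.Icc 0 C := by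
  classical
  obtain ⟨RF, hRF0, hRF⟩ := exists_hull_bound hFSfin
  obtain ⟨RT, hRT0, hRT⟩ := exists_hull_bound hTSfin
  refine ⟨T * (2 * RT) ^ 2 + 1 + S * (2 * RF) ^ 2, by positivity, fun z y => ?_⟩
  have hsz := y.sz_pos
  have hπ₀ := prodCoup_mem (n := y.sz) hm hsz
  rw [fngwLoss_eq]
  constructor
  · exact le_csInf ⟨_, Set.mem_image_of_mem _ hπ₀⟩ fun c hc =>
      gcost_bddBelow hα.1 hβ.1 hαβ z.1 y hc
  · refine le_trans (csInf_le ⟨0, gcost_bddBelow hα.1 hβ.1 hαβ z.1 y⟩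
      (Set.mem_image_of_mem _ hπ₀)) ?_
    refine sum4_le hm _ hπ₀.1 hπ₀.2.1 ?_
    intro i j k l
    have hE : ∑ t, (z.1.2.2 i k t - y.E j l t) ^ 2 ≤ T * (2 * RT) ^ 2 :=
      sq_sum_bound hRT0 hRT (z.2.2.2 i k) (subset_convexHull ℝ TS (y.hE j l))
    have hF : ∑ s, (z.1.1 i s - y.F j s) ^ 2 ≤ S * (2 * RF) ^ 2 :=
      sq_sum_bound hRF0 hRF (z.2.1 i) (subset_convexHull ℝ FS (y.hF j))
    have hA : (z.1.2.1 i k - y.A j l) ^ 2 ≤ 1 := by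
      have h01 := z.2.2.1 i k
      have habs : |z.1.2.1 i k - y.A j l| ≤ 1 := by
        rcases y.hA j l with h | h <;> rw [h] <;> rw [abs_le] <;>
          exact ⟨by linarith [h01.1, h01.2], by linarith [h01.1, h01.2]⟩
      calc (z.1.2.1 i k - y.A j l) ^ 2 ≤ 1 ^ 2 :=
            sq_le_sq' (by linarith [abs_le.mp habs]) (abs_le.mp habs).2
        _ = 1 := one_pow 2
    have hT' : (0:ℝ) ≤ T * (2 * RT) ^ 2 := by positivity
    have hS' : (0:ℝ) ≤ S * (2 * RF) ^ 2 := by positivity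
    have b1 : α * (∑ t, (z.1.2.2 i k t - y.E j l t) ^ 2) ≤ T * (2 * RT) ^ 2 := by
      calc α * _ ≤ 1 * (T * (2 * RT) ^ 2) := by
            apply mul_le_mul hα.2 hE (by positivity) zero_le_one
        _ = _ := one_mul _
    have b2 : β * (z.1.2.1 i k - y.A j l) ^ 2 ≤ 1 := by
      calc β * _ ≤ 1 * 1 := mul_le_mul hβ.2 hA (by positivity) zero_le_one
        _ = 1 := one_mul 1
    have b3 : (1 - α - β) * (∑ s, (z.1.1 i s - y.F j s) ^ 2) ≤ S * (2 * RF) ^ 2 := by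
      calc (1 - α - β) * _ ≤ 1 * (S * (2 * RF) ^ 2) := by
            apply mul_le_mul (by linarith [hα.1, hβ.1]) hF (by positivity) zero_le_one
        _ = _ := one_mul _
    linarith

end Bound

section Meas

variable {S T m mmax : ℕ} {FS : Set (Fin S → ℝ)} {TS : Set (Fin T → ℝ)}

lemma gcost_continuous_pi (α β : ℝ)
    (z : (Fin m → Fin S → ℝ) × (Fin m → Fin m → ℝ) × (Fin m → Fin m → Fin T → ℝ))
    (y : DiscGraph S T mmax FS TS) :
    Continuous fun π : Fin m → Fin y.sz → ℝ => gcost α β z y π := by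
  unfold gcost
  fun_prop

lemma gcost_continuous_z (α β : ℝ) (y : DiscGraph S T mmax FS TS)
    (π : Fin m → Fin y.sz → ℝ) :
    Continuous fun z : (Fin m → Fin S → ℝ) × (Fin m → Fin m → ℝ) ×
        (Fin m → Fin m → Fin T → ℝ) => gcost α β z y π := by
  unfold gcost
  fun_prop

lemma fngwLoss_measurable (hm : 1 ≤ m) {α β : ℝ} (hα : 0 ≤ α) (hβ : 0 ≤ β)
    (hαβ : α + β ≤ 1) (y : DiscGraph S T mmax FS TS) :
    Measurable fun z : RelGraphSet S T m FS TS => fngwLoss α β z y := by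
  classical
  have hsz := y.sz_pos
  set K := coup m y.sz with hK
  have hπ₀ : (fun _ _ => 1 / ((m : ℝ) * y.sz)) ∈ K := prodCoup_mem hm hsz
  -- countable dense subset of K
  obtain ⟨s, hsc, hsd⟩ := TopologicalSpace.exists_countable_dense (↥K)
  have hcnt : Countable ↥s := hsc.to_subtype
  have hsne : Nonempty ↥s := by
    rcases s.eq_empty_or_nonempty with rfl | h
    · exfalso
      have := hsd.closure_eq
      simp only [closure_empty] at this
      exact (this ▸ Set.mem_univ (⟨_, hπ₀⟩ : ↥K)).elim
    · exact h.to_subtype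
  have key : ∀ z : RelGraphSet S T m FS TS,
      fngwLoss α β z y = ⨅ d : ↥s, gcost α β z.1 y ((d : ↥K) : Fin m → Fin y.sz → ℝ) := by
    intro z
    rw [fngwLoss_eq]
    have hbdd : BddBelow (gcost α β z.1 y '' K) := ⟨0, gcost_bddBelow hα hβ hαβ z.1 y⟩
    have hrange : Set.range (fun d : ↥s => gcost α β z.1 y ((d : ↥K) : Fin m → Fin y.sz → ℝ))
        ⊆ gcost α β z.1 y '' K := by
      rintro - ⟨d, rfl⟩
      exact Set.mem_image_of_mem _ (d : ↥K).2
    have hbdd' : BddBelow (Set.range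
        (fun d : ↥s => gcost α β z.1 y ((d : ↥K) : Fin m → Fin y.sz → ℝ))) :=
      hbdd.mono hrange
    refine le_antisymm ?_ ?_
    · exact le_ciInf fun d => csInf_le hbdd (Set.mem_image_of_mem _ (d : ↥K).2)
    · refine le_csInf ⟨_, Set.mem_image_of_mem _ hπ₀⟩ ?_
      rintro c ⟨π, hπK, rfl⟩
      -- π is in the closure of the countable dense subset
      have hπcl : π ∈ closure ((fun d : ↥K => (d : Fin m → Fin y.sz → ℝ)) '' s) :=
        map_mem_closure continuous_subtype_val (hsd ⟨π, hπK⟩)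
          fun x hx => Set.mem_image_of_mem _ hx
      have hgπ : gcost α β z.1 y π ∈
          closure (gcost α β z.1 y '' ((fun d : ↥K => (d : Fin m → Fin y.sz → ℝ)) '' s)) :=
        map_mem_closure (gcost_continuous_pi α β z.1 y) hπcl (Set.mapsTo_image _ _)
      have himg : gcost α β z.1 y '' ((fun d : ↥K => (d : Fin m → Fin y.sz → ℝ)) '' s)
          = Set.range (fun d : ↥s => gcost α β z.1 y ((d : ↥K) : Fin m → Fin y.sz → ℝ)) := by
        rw [← Set.image_comp, Set.image_eq_range]
        rfl
      rw [himg] at hgπ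
      have hsub : closure (Set.range
          (fun d : ↥s => gcost α β z.1 y ((d : ↥K) : Fin m → Fin y.sz → ℝ)))
          ⊆ Set.Ici (⨅ d : ↥s, gcost α β z.1 y ((d : ↥K) : Fin m → Fin y.sz → ℝ)) :=
        closure_minimal (fun x hx => by
          obtain ⟨d, rfl⟩ := hx
          exact ciInf_le hbdd' d) isClosed_Ici
      exact hsub hgπ
  rw [show (fun z : RelGraphSet S T m FS TS => fngwLoss α β z y) = fun z =>
      ⨅ d : ↥s, gcost α β z.1 y ((d : ↥K) : Fin m → Fin y.sz → ℝ) from funext key]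
  exact Measurable.iInf fun d =>
    ((gcost_continuous_z α β y _).comp continuous_subtype_val).measurable

end Meas

section Aux

variable {S T m mmax : ℕ} {FS : Set (Fin S → ℝ)} {TS : Set (Fin T → ℝ)}

/-- finiteness of the discrete graph space -/
lemma discGraph_finite (hFS : FS.Finite) (hTS : TS.Finite) :
    Finite (DiscGraph S T mmax FS TS) := by
  classical
  have hFS' : Finite ↥FS := hFS.to_subtype
  have hTS' : Finite ↥TS := hTS.to_subtype
  have hB : Finite ↥({(0:ℝ), 1} : Set ℝ) :=
    ((Set.finite_singleton (1:ℝ)).insert 0).to_subtype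
  let pack : DiscGraph S T mmax FS TS →
      Σ n : Fin (mmax + 1), (Fin n → ↥FS) × (Fin n → Fin n → ↥({(0:ℝ), 1} : Set ℝ))
        × (Fin n → Fin n → ↥TS) :=
    fun y => ⟨⟨y.sz, Nat.lt_succ_of_le y.sz_le⟩,
      fun i => ⟨y.F i, y.hF i⟩,
      fun i j => ⟨y.A i j, by rcases y.hA i j with h | h <;> simp [h]⟩,
      fun i j => ⟨y.E i j, y.hE i j⟩⟩
  apply Finite.of_injective pack
  rintro ⟨sa, pa, qa, Fa, Aa, Ea, hFa, hAa, hEa⟩ ⟨sb, pb, qb, Fb, Ab, Eb, hFb, hAb, hEb⟩ hab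
  have hsz : sa = sb := congrArg (fun p => (Sigma.fst p).val) hab
  subst hsz
  have h' := eq_of_heq (Sigma.ext_iff.mp hab).2
  simp only [pack, Prod.mk.injEq] at h'
  obtain ⟨h1, h2, h3⟩ := h'
  obtain rfl : Fa = Fb := by
    funext i; exact congrArg Subtype.val (congrFun h1 i)
  obtain rfl : Aa = Ab := by
    funext i j; exact congrArg Subtype.val (congrFun (congrFun h2 i) j)
  obtain rfl : Ea = Eb := by
    funext i j; exact congrArg Subtype.val (congrFun (congrFun h3 i) j)
  rfl

end Aux

/-- **Implicit Loss Embedding for the FNGW loss**: there are a separable Hilbert space `H` and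
measurable bounded maps `ψ : 𝒢_m → H`, `φ : 𝒢 → H` with
`FNGW_{α,β}(z, y) = ⟨ψ z, φ y⟩_H` and `‖φ y‖ ≤ 1`. -/
theorem fngw_admits_ILE
    (S T m mmax : ℕ) (hS : 1 ≤ S) (hT : 1 ≤ T) (hm : 1 ≤ m) (hmmax : 1 ≤ mmax)
    (FS : Set (Fin S → ℝ)) (TS : Set (Fin T → ℝ))
    (hFSfin : FS.Finite) (hTSfin : TS.Finite)
    (hFSne : FS.Nonempty) (hTSne : TS.Nonempty)
    (α β : ℝ) (hα : α ∈ Set.Icc (0 : ℝ) 1) (hβ : β ∈ Set.Icc (0 : ℝ) 1) (hαβ : α + β ≤ 1) :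
    ∃ (H : Type) (iN : NormedAddCommGroup H),
      letI := iN
      ∃ (iI : InnerProductSpace ℝ H),
        letI := iI
        letI : MeasurableSpace H := borel H
        CompleteSpace H ∧ TopologicalSpace.SeparableSpace H ∧
        ∃ (ψ : RelGraphSet S T m FS TS → H) (φ : DiscGraph S T mmax FS TS → H),
          Measurable ψ
          ∧ Measurable[⊤] φ
          ∧ Bornology.IsBounded (Set.range ψ)
          ∧ Bornology.IsBounded (Set.range φ)
          ∧ (∀ z y, fngwLoss α β z y = (inner ℝ (ψ z) (φ y) : ℝ))
          ∧ (∀ y, ‖φ y‖ ≤ 1) := by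
  classical
  have hfin : Finite (DiscGraph S T mmax FS TS) := discGraph_finite hFSfin hTSfin
  obtain ⟨n, ⟨e⟩⟩ := Finite.exists_equiv_fin (DiscGraph S T mmax FS TS)
  obtain ⟨C, hC0, hbnd⟩ := fngwLoss_mem_Icc (mmax := mmax) hm hFSfin hTSfin hα hβ hαβ
  refine ⟨EuclideanSpace ℝ (Fin n), inferInstance, inferInstance, inferInstance,
    inferInstance, ?_⟩
  have hborel : (borel (EuclideanSpace ℝ (Fin n)) : MeasurableSpace _)
      = (inferInstance : MeasurableSpace (EuclideanSpace ℝ (Fin n))) :=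
    BorelSpace.measurable_eq.symm
  refine ⟨fun z => (WithLp.toLp 2 (fun k => fngwLoss α β z (e.symm k)) : EuclideanSpace ℝ (Fin n)),
    fun y => EuclideanSpace.single (e y) (1 : ℝ), ?_, fun _ _ => trivial, ?_, ?_, ?_, ?_⟩
  · -- measurability of ψ
    exact ((PiLp.continuous_toLp 2 _).measurable.comp (measurable_pi_lambda _ fun k =>
      fngwLoss_measurable hm hα.1 hβ.1 hαβ (e.symm k))).mono le_rfl (le_of_eq hborel)
  · -- bounded range of ψ
    rw [isBounded_iff_forall_norm_le]
    refine ⟨Real.sqrt (n * C ^ 2), ?_⟩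
    rintro - ⟨z, rfl⟩
    rw [EuclideanSpace.norm_eq]
    refine Real.sqrt_le_sqrt ?_
    calc ∑ k, ‖fngwLoss α β z (e.symm k)‖ ^ 2 ≤ ∑ _k : Fin n, C ^ 2 := by
          refine Finset.sum_le_sum fun k _ => ?_
          have h := hbnd z (e.symm k)
          rw [Real.norm_eq_abs, abs_of_nonneg h.1]
          exact pow_le_pow_left₀ h.1 h.2 2
      _ = n * C ^ 2 := by simp [Finset.sum_const, Finset.card_univ, nsmul_eq_mul]
  · -- bounded range of φ
    rw [isBounded_iff_forall_norm_le]
    refine ⟨1, ?_⟩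
    rintro - ⟨y, rfl⟩
    simp [EuclideanSpace.norm_single]
  · -- inner product identity
    intro z y
    rw [EuclideanSpace.inner_single_right]
    simp only [map_one, RCLike.star_def, starRingEnd_apply, star_trivial, one_mul]
    rw [Equiv.symm_apply_apply]
  · -- norm of φ
    intro y
    simp [EuclideanSpace.norm_single]
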